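/- Let μ be a probability measure on a measurable space (X, Σ_X), let v : X → [0, C_v] be measurable, let π : X → (0,1) be measurable with 1/π(x) ≤ C₁ for all x (C_v, C₁ finite constants), and let f : X → ℝ be measurable. Let (Ω, F, P) be a probability space, (k_t)_{t≥1} real numbers with k_t ∈ [2, ∞), and for each t let f̂_t : Ω×X → ℝ and π_t : Ω×X → [1/k_t, 1 − 1/k_t] be jointly measurable. Define the random L² errors N_t(ω) := (∫ (f̂_t(ω,x) − f(x))² dμ)^{1/2} and Q_t(ω) := (∫ (π_t(ω,x) − π(x))² dμ)^{1/2}, and suppose k_t·N_t → 0 in probability and k_t·Q_t → 0 in probability as t → ∞. Then the random variables G_t(ω) := ∫ [ (v(x) + (f(x) − f̂_t(ω,x))²)/π_t(ω,x) − v(x)/π(x) ] dμ(x) converge to 0 in probability as t → ∞. -/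

import Mathlib

open MeasureTheory ProbabilityTheory Filter Topology

lemma aux_l1_le_l2 {X : Type*} [MeasurableSpace X] (μ : Measure X) [IsProbabilityMeasure μ]
    (h : X → ℝ) (hm : Measurable h) (C : ℝ) (hb : ∀ x, |h x| ≤ C) :
    ∫ x, |h x| ∂μ ≤ Real.sqrt (∫ x, (h x) ^ 2 ∂μ) := by
  have h2 : Integrable (fun x => (h x) ^ 2) μ :=
    (integrable_const (C ^ 2)).mono' ((hm.pow_const 2).aestronglyMeasurable)
      (ae_of_all _ fun x => by
        rw [Real.norm_eq_abs, abs_pow]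
        exact pow_le_pow_left₀ (abs_nonneg _) (hb x) 2)
  have h1 : Integrable (fun x => |h x|) μ :=
    (integrable_const C).mono' (hm.abs.aestronglyMeasurable)
      (ae_of_all _ fun x => by rw [Real.norm_eq_abs, abs_abs]; exact hb x)
  set a := ∫ x, |h x| ∂μ with ha
  have ha0 : 0 ≤ a := integral_nonneg fun x => abs_nonneg _
  have hexp : ∀ x, (|h x| - a) ^ 2 = (h x) ^ 2 - (2 * a) * |h x| + a ^ 2 := fun x => by
    rw [sub_sq, sq_abs]; ring
  have h0 : 0 ≤ ∫ x, ((h x) ^ 2 - (2 * a) * |h x| + a ^ 2) ∂μ := by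
    have := integral_nonneg (μ := μ) (f := fun x => (|h x| - a) ^ 2) (fun x => sq_nonneg _)
    simpa [hexp] using this
  have hsubint : Integrable (fun x => (h x) ^ 2 - (2 * a) * |h x|) μ := h2.sub (h1.const_mul (2 * a))
  rw [integral_add hsubint (integrable_const _),
      integral_sub h2 (h1.const_mul _), integral_const_mul, integral_const] at h0
  simp only [measure_univ, probReal_univ, ENNReal.toReal_one, smul_eq_mul, one_mul, ← ha] at h0
  have hsq : a ^ 2 ≤ ∫ x, (h x) ^ 2 ∂μ := by nlinarith [h0]
  calc a = Real.sqrt (a ^ 2) := (Real.sqrt_sq ha0).symm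
    _ ≤ _ := Real.sqrt_le_sqrt hsq

lemma aux_key_bound {X : Type*} [MeasurableSpace X] (μX : Measure X) [IsProbabilityMeasure μX]
    (v π f : X → ℝ) (Cv C₁ : ℝ)
    (hv : Measurable v) (hvbd : ∀ x, v x ∈ Set.Icc 0 Cv)
    (hπ : Measurable π) (hπ01 : ∀ x, π x ∈ Set.Ioo (0 : ℝ) 1)
    (hπbd : ∀ x, 1 / π x ≤ C₁)
    (hf : Measurable f) (hCv : 0 ≤ Cv) (hC₁ : 0 < C₁)
    (k : ℝ) (hk : 2 ≤ k)
    (g p : X → ℝ) (hg : Measurable g) (hp : Measurable p)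
    (hpbd : ∀ x, p x ∈ Set.Icc (1 / k) (1 - 1 / k)) :
    |∫ x, ((v x + (f x - g x) ^ 2) / p x - v x / π x) ∂μX| ≤
      Cv * C₁ * (k * Real.sqrt (∫ x, (p x - π x) ^ 2 ∂μX))
      + (k * Real.sqrt (∫ x, (f x - g x) ^ 2 ∂μX)) ^ 2 / 2 := by
  have hk0 : (0 : ℝ) < k := by linarith
  have hik : (0 : ℝ) < 1 / k := by positivity
  have hp0 : ∀ x, 0 < p x := fun x => lt_of_lt_of_le hik (hpbd x).1
  have hp1 : ∀ x, p x ≤ 1 := fun x => le_trans (hpbd x).2 (by linarith)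
  have hpk : ∀ x, 1 / p x ≤ k := fun x => by
    rw [div_le_iff₀ (hp0 x)]
    calc (1 : ℝ) = k * (1 / k) := by field_simp
      _ ≤ k * p x := by gcongr; exact (hpbd x).1
  have hπ0 : ∀ x, 0 < π x := fun x => (hπ01 x).1
  have hπ1 : ∀ x, π x < 1 := fun x => (hπ01 x).2
  have hv0 : ∀ x, 0 ≤ v x := fun x => (hvbd x).1
  have hvC : ∀ x, v x ≤ Cv := fun x => (hvbd x).2
  set N := Real.sqrt (∫ x, (f x - g x) ^ 2 ∂μX) with hN
  set Q := Real.sqrt (∫ x, (p x - π x) ^ 2 ∂μX) with hQ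
  have hN0 : 0 ≤ N := Real.sqrt_nonneg _
  have hQ0 : 0 ≤ Q := Real.sqrt_nonneg _
  have hRHS : 0 ≤ Cv * C₁ * (k * Q) + (k * N) ^ 2 / 2 := by positivity
  have meas_s : Measurable fun x => (f x - g x) ^ 2 := (hf.sub hg).pow_const 2
  -- boundedness of v/p - v/π
  have hbd1 : ∀ x, ‖v x / p x - v x / π x‖ ≤ Cv * k + Cv * C₁ := by
    intro x
    rw [Real.norm_eq_abs]
    have e1 : v x / p x ≤ Cv * k := by
      rw [div_eq_mul_one_div]
      exact mul_le_mul (hvC x) (hpk x) (one_div_nonneg.mpr (hp0 x).le) hCv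
    have e2 : v x / π x ≤ Cv * C₁ := by
      rw [div_eq_mul_one_div]
      exact mul_le_mul (hvC x) (hπbd x) (one_div_nonneg.mpr (hπ0 x).le) hCv
    have e3 : 0 ≤ v x / p x := div_nonneg (hv0 x) (hp0 x).le
    have e4 : 0 ≤ v x / π x := div_nonneg (hv0 x) (hπ0 x).le
    rw [abs_sub_le_iff]
    constructor <;> nlinarith
  by_cases hint : Integrable (fun x => (f x - g x) ^ 2) μX
  · -- integrable case
    have hI1 : Integrable (fun x => v x * (1 / p x - 1 / π x)) μX := by
      refine (integrable_const (Cv * k + Cv * C₁)).mono'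
        ((hv.mul ((measurable_const.div hp).sub (measurable_const.div hπ))).aestronglyMeasurable)
        (ae_of_all _ fun x => ?_)
      have e : v x * (1 / p x - 1 / π x) = v x / p x - v x / π x := by ring
      rw [e]; exact hbd1 x
    have hptwise2 : ∀ x, (f x - g x) ^ 2 / p x ≤ k * ((f x - g x) ^ 2) := by
      intro x
      rw [div_eq_mul_one_div]
      calc (f x - g x) ^ 2 * (1 / p x) ≤ (f x - g x) ^ 2 * k :=
            mul_le_mul_of_nonneg_left (hpk x) (sq_nonneg _)
        _ = k * ((f x - g x) ^ 2) := mul_comm _ _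
    have hI2 : Integrable (fun x => (f x - g x) ^ 2 / p x) μX := by
      refine (hint.const_mul k).mono' ((meas_s.div hp).aestronglyMeasurable)
        (ae_of_all _ fun x => ?_)
      rw [Real.norm_eq_abs, abs_of_nonneg (div_nonneg (sq_nonneg _) (hp0 x).le)]
      exact hptwise2 x
    have hsplit : (fun x => (v x + (f x - g x) ^ 2) / p x - v x / π x)
        = fun x => v x * (1 / p x - 1 / π x) + (f x - g x) ^ 2 / p x := by
      funext x
      have hpne := (hp0 x).ne'
      have hπne := (hπ0 x).ne'
      field_simp
      try ring
    rw [hsplit, integral_add hI1 hI2]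
    -- bound the first integral
    have habs : ∀ x, |v x * (1 / p x - 1 / π x)| ≤ Cv * C₁ * k * |p x - π x| := by
      intro x
      have hpne := (hp0 x).ne'
      have hπne := (hπ0 x).ne'
      have e : v x * (1 / p x - 1 / π x) = v x * ((π x - p x) * (1 / p x) * (1 / π x)) := by
        field_simp
        try ring
      have hinvp : 0 < 1 / p x := one_div_pos.mpr (hp0 x)
      have hinvπ : 0 < 1 / π x := one_div_pos.mpr (hπ0 x)
      calc |v x * (1 / p x - 1 / π x)|
          = v x * (|p x - π x| * ((1 / p x) * (1 / π x))) := by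
            rw [e, abs_mul, abs_mul, abs_mul, abs_of_nonneg (hv0 x), abs_of_pos hinvp,
              abs_of_pos hinvπ, abs_sub_comm]
            ring
        _ ≤ Cv * (|p x - π x| * (k * C₁)) := by
            gcongr
            exacts [hvC x, hpk x, hπbd x]
        _ = Cv * C₁ * k * |p x - π x| := by ring
    have hIabs : Integrable (fun x => |p x - π x|) μX := by
      refine (integrable_const (2 : ℝ)).mono' ((hp.sub hπ).abs.aestronglyMeasurable)
        (ae_of_all _ fun x => ?_)
      rw [Real.norm_eq_abs, abs_abs, abs_sub_le_iff]
      have := hp0 x; have := hp1 x; have := hπ0 x; have := hπ1 x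
      constructor <;> linarith
    have h1 : |∫ x, v x * (1 / p x - 1 / π x) ∂μX| ≤ Cv * C₁ * k * Q := by
      calc |∫ x, v x * (1 / p x - 1 / π x) ∂μX|
          ≤ ∫ x, |v x * (1 / p x - 1 / π x)| ∂μX := by
            simpa only [Real.norm_eq_abs] using
              norm_integral_le_integral_norm (μ := μX) (fun x => v x * (1 / p x - 1 / π x))
        _ ≤ ∫ x, Cv * C₁ * k * |p x - π x| ∂μX := by
            exact integral_mono hI1.abs (hIabs.const_mul _) habs
        _ = Cv * C₁ * k * ∫ x, |p x - π x| ∂μX := integral_const_mul _ _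
        _ ≤ Cv * C₁ * k * Q := by
            have hl := aux_l1_le_l2 μX (fun x => p x - π x) (hp.sub hπ) 2 (fun x => by
              rw [abs_sub_le_iff]
              have := hp0 x; have := hp1 x; have := hπ0 x; have := hπ1 x
              constructor <;> linarith)
            have hc : 0 ≤ Cv * C₁ * k := by positivity
            exact mul_le_mul_of_nonneg_left hl hc
    have h2 : ∫ x, (f x - g x) ^ 2 / p x ∂μX ≤ k * N ^ 2 := by
      have h2a := integral_mono hI2 (hint.const_mul k) hptwise2
      rw [integral_const_mul] at h2a
      have hN2 : N ^ 2 = ∫ x, (f x - g x) ^ 2 ∂μX :=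
        Real.sq_sqrt (integral_nonneg fun x => sq_nonneg _)
      rw [hN2]
      exact h2a
    have h2nn : 0 ≤ ∫ x, (f x - g x) ^ 2 / p x ∂μX :=
      integral_nonneg fun x => div_nonneg (sq_nonneg _) (hp0 x).le
    have htriangle := abs_add_le (∫ x, v x * (1 / p x - 1 / π x) ∂μX)
      (∫ x, (f x - g x) ^ 2 / p x ∂μX)
    rw [abs_of_nonneg h2nn] at htriangle
    have hkn : k * N ^ 2 ≤ (k * N) ^ 2 / 2 := by nlinarith
    nlinarith
  · -- non-integrable case: the Bochner integral is zero
    have hgint : ¬ Integrable (fun x => (v x + (f x - g x) ^ 2) / p x - v x / π x) μX := by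
      intro hI
      have hb : Integrable (fun x => v x / p x - v x / π x) μX := by
        refine (integrable_const (Cv * k + Cv * C₁)).mono'
          (((hv.div hp).sub (hv.div hπ)).aestronglyMeasurable)
          (ae_of_all _ fun x => hbd1 x)
      have hI2 : Integrable (fun x => (f x - g x) ^ 2 / p x) μX := by
        have e : (fun x => (f x - g x) ^ 2 / p x)
            = fun x => ((v x + (f x - g x) ^ 2) / p x - v x / π x) - (v x / p x - v x / π x) := by
          funext x
          have hpne : p x ≠ 0 := (hp0 x).ne'
          have hπne : π x ≠ 0 := (hπ0 x).ne'
          field_simp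
          ring
        rw [e]
        exact hI.sub hb
      refine hint ?_
      refine hI2.mono' (meas_s.aestronglyMeasurable) (ae_of_all _ fun x => ?_)
      rw [Real.norm_eq_abs, abs_of_nonneg (sq_nonneg _), le_div_iff₀ (hp0 x)]
      nlinarith [sq_nonneg (f x - g x), hp1 x, hp0 x]
    rw [integral_undef hgint]
    simpa using hRHS

/-- Lemma 1: convergence of the first term in the conditional-variance
decomposition of the A2IPW martingale difference sequence. -/
theorem a2ipw_variance_first_term_converges
    {X : Type*} [mX : MeasurableSpace X] (μX : Measure X) [IsProbabilityMeasure μX]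
    (v π f : X → ℝ) (Cv C₁ : ℝ)
    (hv : Measurable v) (hvbd : ∀ x, v x ∈ Set.Icc 0 Cv)
    (hπ : Measurable π) (hπ01 : ∀ x, π x ∈ Set.Ioo (0 : ℝ) 1)
    (hπbd : ∀ x, 1 / π x ≤ C₁)
    (hf : Measurable f)
    {Ω : Type*} [MeasurableSpace Ω] (μ : Measure Ω) [IsProbabilityMeasure μ]
    (k : ℕ → ℝ) (hk : ∀ t, 2 ≤ k t)
    (fhat : ℕ → Ω → X → ℝ) (πt : ℕ → Ω → X → ℝ)
    (hfhatmeas : ∀ t, Measurable (fun p : Ω × X => fhat t p.1 p.2))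
    (hπtmeas : ∀ t, Measurable (fun p : Ω × X => πt t p.1 p.2))
    (hπtbd : ∀ t ω x, πt t ω x ∈ Set.Icc (1 / k t) (1 - 1 / k t))
    (hNconv : TendstoInMeasure μ
      (fun t ω => k t * Real.sqrt (∫ x, (fhat t ω x - f x) ^ 2 ∂μX))
      atTop (fun _ => (0 : ℝ)))
    (hQconv : TendstoInMeasure μ
      (fun t ω => k t * Real.sqrt (∫ x, (πt t ω x - π x) ^ 2 ∂μX))
      atTop (fun _ => (0 : ℝ))) :
    TendstoInMeasure μ
      (fun t ω => ∫ x, ((v x + (f x - fhat t ω x) ^ 2) / πt t ω x - v x / π x) ∂μX)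
      atTop (fun _ => (0 : ℝ)) := by
  have hXne : Nonempty X := by
    by_contra hX
    rw [not_nonempty_iff] at hX
    have h1 : (μX Set.univ) = 1 := measure_univ
    rw [Set.univ_eq_empty_iff.mpr hX, measure_empty] at h1
    exact zero_ne_one h1
  obtain ⟨x₀⟩ := hXne
  have hCv : 0 ≤ Cv := le_trans (hvbd x₀).1 (hvbd x₀).2
  have hC₁ : 0 < C₁ := lt_of_lt_of_le (one_div_pos.mpr (hπ01 x₀).1) (hπbd x₀)
  set A : ℝ := Cv * C₁ + 1 with hA
  have hA0 : 0 < A := by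
    have := mul_nonneg hCv hC₁.le
    simp only [hA]; linarith
  have hkey : ∀ t ω,
      |∫ x, ((v x + (f x - fhat t ω x) ^ 2) / πt t ω x - v x / π x) ∂μX| ≤
        A * (k t * Real.sqrt (∫ x, (πt t ω x - π x) ^ 2 ∂μX))
        + (k t * Real.sqrt (∫ x, (fhat t ω x - f x) ^ 2 ∂μX)) ^ 2 / 2 := by
    intro t ω
    have hb := aux_key_bound μX v π f Cv C₁ hv hvbd hπ hπ01 hπbd hf hCv hC₁ (k t) (hk t)
      (fhat t ω) (πt t ω)
      ((hfhatmeas t).comp measurable_prodMk_left)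
      ((hπtmeas t).comp measurable_prodMk_left)
      (fun x => hπtbd t ω x)
    have hflip : (fun x => (f x - fhat t ω x) ^ 2) = fun x => (fhat t ω x - f x) ^ 2 :=
      funext fun x => by ring
    rw [hflip] at hb
    refine le_trans hb ?_
    have hq0 : 0 ≤ k t * Real.sqrt (∫ x, (πt t ω x - π x) ^ 2 ∂μX) :=
      mul_nonneg (by linarith [hk t]) (Real.sqrt_nonneg _)
    have : Cv * C₁ ≤ A := by simp only [hA]; linarith
    nlinarith
  rw [tendstoInMeasure_iff_dist] at hQconv hNconv ⊢
  intro ε hε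
  have hδ : 0 < ε / (2 * A) := by positivity
  have hη : 0 < Real.sqrt ε := Real.sqrt_pos.mpr hε
  have h1 := hQconv (ε / (2 * A)) hδ
  have h2 := hNconv (Real.sqrt ε) hη
  refine tendsto_of_tendsto_of_tendsto_of_le_of_le tendsto_const_nhds
    (by simpa using h1.add h2) (fun t => zero_le) (fun t => ?_)
  refine le_trans (measure_mono ?_) (measure_union_le _ _)
  intro ω hω
  simp only [Set.mem_setOf_eq, Real.dist_eq, sub_zero] at hω
  rw [Set.mem_union]
  by_contra hc
  simp only [Set.mem_union, Set.mem_setOf_eq, Real.dist_eq, sub_zero, not_or, not_le] at hc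
  obtain ⟨hc1, hc2⟩ := hc
  have e1 : k t * Real.sqrt (∫ x, (πt t ω x - π x) ^ 2 ∂μX) < ε / (2 * A) :=
    lt_of_le_of_lt (by rw [← abs_mul]; exact le_abs_self _) hc1
  have e2 : k t * Real.sqrt (∫ x, (fhat t ω x - f x) ^ 2 ∂μX) < Real.sqrt ε :=
    lt_of_le_of_lt (by rw [← abs_mul]; exact le_abs_self _) hc2
  have hkk := hkey t ω
  have hNnn : 0 ≤ k t * Real.sqrt (∫ x, (fhat t ω x - f x) ^ 2 ∂μX) :=
    mul_nonneg (by linarith [hk t]) (Real.sqrt_nonneg _)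
  have hsq : (k t * Real.sqrt (∫ x, (fhat t ω x - f x) ^ 2 ∂μX)) ^ 2 < ε := by
    have h := Real.sq_sqrt hε.le
    nlinarith
  have hfirst : A * (k t * Real.sqrt (∫ x, (πt t ω x - π x) ^ 2 ∂μX)) < ε / 2 := by
    have := mul_lt_mul_of_pos_left e1 hA0
    have hAe : A * (ε / (2 * A)) = ε / 2 := by field_simp
    linarith
  linarith [le_abs_self (∫ x, ((v x + (f x - fhat t ω x) ^ 2) / πt t ω x - v x / π x) ∂μX)]
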